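/- Let μ be a partition of n and consider all partitions λ of n+1 whose diagram is obtained from [μ] by adding one node, at position (i(λ), j(λ)). Then Σ_λ dim(S^λ)·(i(λ) − j(λ)) = 0, where S^λ is the Specht module (equivalently, dim S^λ is the number of standard Young tableaux of shape λ). -/

import Mathlib

/- STATEMENT 11: Σ_λ dim(S^λ)·(i(λ) − j(λ)) = 0, the sum over all partitions λ of n+1
   obtained from μ by adding one node at position (i(λ), j(λ)); dim S^λ is the number
   of standard Young tableaux of shape λ. -/

/-- The number of standard Young tableaux of shape `ν`: bijective fillings of the
    diagram by `{1,…,n}` increasing along rows and down columns. -/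
noncomputable def numSYT (ν : YoungDiagram) : ℕ :=
  Nat.card {e : ν.cells ≃ Fin ν.card //
    ∀ a b : ν.cells,
      (((a : ℕ × ℕ).1 = (b : ℕ × ℕ).1 ∧ (a : ℕ × ℕ).2 < (b : ℕ × ℕ).2) → e a < e b) ∧
      (((a : ℕ × ℕ).2 = (b : ℕ × ℕ).2 ∧ (a : ℕ × ℕ).1 < (b : ℕ × ℕ).1) → e a < e b)}

open Finset


namespace YD11


def Addable (μ : YoungDiagram) (c : ℕ × ℕ) : Prop :=
  c ∉ μ.cells ∧ IsLowerSet (↑(insert c μ.cells) : Set (ℕ × ℕ))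

def Corner (μ : YoungDiagram) (d : ℕ × ℕ) : Prop :=
  d ∈ μ.cells ∧ (d.1 + 1, d.2) ∉ μ.cells ∧ (d.1, d.2 + 1) ∉ μ.cells

open Classical in
noncomputable def ydInsert (μ : YoungDiagram) (c : ℕ × ℕ) : YoungDiagram :=
  if h : IsLowerSet (↑(insert c μ.cells) : Set (ℕ × ℕ)) then ⟨insert c μ.cells, h⟩ else μ

lemma isLowerSet_erase {μ : YoungDiagram} {d : ℕ × ℕ} (hd : Corner μ d) :
    IsLowerSet (↑(μ.cells.erase d) : Set (ℕ × ℕ)) := by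
  intro x y hyx hx
  simp only [Finset.coe_erase, Set.mem_diff, Finset.mem_coe, Set.mem_singleton_iff] at hx ⊢
  obtain ⟨hxμ, hxd⟩ := hx
  have hyμ : y ∈ μ.cells := μ.isLowerSet hyx hxμ
  refine ⟨hyμ, fun hyd => ?_⟩
  subst hyd
  obtain ⟨h1, h2⟩ := hyx
  rcases Nat.lt_or_ge y.1 x.1 with h | h
  · exact hd.2.1 (μ.up_left_mem h h2 (by simpa using hxμ))
  · have he1 : y.1 = x.1 := le_antisymm h1 h
    have h2' : y.2 < x.2 := by
      rcases Nat.lt_or_ge y.2 x.2 with h' | h'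
      · exact h'
      · exact absurd (Prod.ext he1.symm (le_antisymm h' h2)) hxd
    exact hd.2.2 (μ.up_left_mem (le_of_eq he1) h2' (by simpa using hxμ))

open Classical in
noncomputable def ydErase (μ : YoungDiagram) (d : ℕ × ℕ) : YoungDiagram :=
  if h : IsLowerSet (↑(μ.cells.erase d) : Set (ℕ × ℕ)) then ⟨μ.cells.erase d, h⟩ else μ

lemma ydInsert_cells {μ : YoungDiagram} {c : ℕ × ℕ} (h : Addable μ c) :
    (ydInsert μ c).cells = insert c μ.cells := by
  rw [ydInsert, dif_pos h.2]

lemma ydErase_cells {μ : YoungDiagram} {d : ℕ × ℕ} (h : Corner μ d) :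
    (ydErase μ d).cells = μ.cells.erase d := by
  rw [ydErase, dif_pos (isLowerSet_erase h)]

lemma ydInsert_card {μ : YoungDiagram} {c : ℕ × ℕ} (h : Addable μ c) :
    (ydInsert μ c).card = μ.card + 1 := by
  rw [YoungDiagram.card, ydInsert_cells h, Finset.card_insert_of_notMem h.1]

lemma ydErase_card {μ : YoungDiagram} {d : ℕ × ℕ} (h : Corner μ d) :
    (ydErase μ d).card = μ.card - 1 := by
  rw [YoungDiagram.card, ydErase_cells h, Finset.card_erase_of_mem h.1]

lemma corner_insert {μ : YoungDiagram} {c : ℕ × ℕ} (h : Addable μ c) :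
    Corner (ydInsert μ c) c := by
  rw [Corner, ydInsert_cells h]
  refine ⟨Finset.mem_insert_self _ _, ?_, ?_⟩
  · rw [Finset.mem_insert]
    rintro (h' | h')
    · exact absurd (congrArg Prod.fst h') (by simp)
    · exact h.1 (μ.up_left_mem (Nat.le_succ _) le_rfl (by simpa using h'))
  · rw [Finset.mem_insert]
    rintro (h' | h')
    · exact absurd (congrArg Prod.snd h') (by simp)
    · exact h.1 (μ.up_left_mem le_rfl (Nat.le_succ _) (by simpa using h'))

lemma erase_ydInsert {μ : YoungDiagram} {c : ℕ × ℕ} (h : Addable μ c) :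
    ydErase (ydInsert μ c) c = μ := by
  ext1
  rw [ydErase_cells (corner_insert h), ydInsert_cells h, Finset.erase_insert h.1]

lemma addable_erase {μ : YoungDiagram} {d : ℕ × ℕ} (h : Corner μ d) :
    Addable (ydErase μ d) d := by
  constructor
  · rw [ydErase_cells h]; simp
  · rw [ydErase_cells h, Finset.insert_erase h.1]
    exact μ.isLowerSet

lemma insert_ydErase {μ : YoungDiagram} {d : ℕ × ℕ} (h : Corner μ d) :
    ydInsert (ydErase μ d) d = μ := by
  ext1
  rw [ydInsert_cells (addable_erase h), ydErase_cells h, Finset.insert_erase h.1]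

lemma addable_iff {μ : YoungDiagram} {i j : ℕ} :
    Addable μ (i, j) ↔ j = μ.rowLen i ∧ (i = 0 ∨ μ.rowLen i < μ.rowLen (i - 1)) := by
  constructor
  · rintro ⟨hne, hls⟩
    have hji : μ.rowLen i ≤ j := by
      by_contra h
      exact hne (by simpa [YoungDiagram.mem_cells, YoungDiagram.mem_iff_lt_rowLen] using
        Nat.lt_of_not_le h)
    have hj : j = μ.rowLen i := by
      by_contra h
      have hlt : μ.rowLen i < j := lt_of_le_of_ne hji (by omega)
      have hle : ((i, μ.rowLen i) : ℕ × ℕ) ≤ (i, j) := Prod.mk_le_mk.mpr ⟨le_rfl, le_of_lt hlt⟩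
      have : ((i, μ.rowLen i) : ℕ × ℕ) ∈ (↑(insert (i, j) μ.cells) : Set (ℕ × ℕ)) :=
        hls hle (by simp)
      simp only [Finset.coe_insert, Set.mem_insert_iff, Finset.mem_coe] at this
      rcases this with h' | h'
      · exact absurd (congrArg Prod.snd h') (by simp; omega)
      · rw [YoungDiagram.mem_cells, YoungDiagram.mem_iff_lt_rowLen] at h'; omega
    refine ⟨hj, ?_⟩
    rcases Nat.eq_zero_or_pos i with h0 | h0
    · exact Or.inl h0
    · right
      have hle : ((i - 1, j) : ℕ × ℕ) ≤ (i, j) := Prod.mk_le_mk.mpr ⟨by omega, le_rfl⟩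
      have : ((i - 1, j) : ℕ × ℕ) ∈ (↑(insert (i, j) μ.cells) : Set (ℕ × ℕ)) :=
        hls hle (by simp)
      simp only [Finset.coe_insert, Set.mem_insert_iff, Finset.mem_coe] at this
      rcases this with h' | h'
      · exact absurd (congrArg Prod.fst h') (by simp; omega)
      · rw [YoungDiagram.mem_cells, YoungDiagram.mem_iff_lt_rowLen] at h'; omega
  · rintro ⟨rfl, hcond⟩
    constructor
    · simp [YoungDiagram.mem_cells, YoungDiagram.mem_iff_lt_rowLen]
    · intro x y hyx hx
      simp only [Finset.coe_insert, Set.mem_insert_iff, Finset.mem_coe] at hx ⊢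
      rcases hx with rfl | hx
      · obtain ⟨h1, h2⟩ := hyx
        simp only at h1 h2
        by_cases hy : y = (i, μ.rowLen i)
        · exact Or.inl hy
        · right
          rw [YoungDiagram.mem_cells, show y = (y.1, y.2) from rfl,
            YoungDiagram.mem_iff_lt_rowLen]
          rcases Nat.lt_or_ge y.2 (μ.rowLen i) with h' | h'
          · exact lt_of_lt_of_le h' (μ.rowLen_anti _ _ h1)
          · have h2' : y.2 = μ.rowLen i := le_antisymm h2 h'
            have h1' : y.1 < i := by
              rcases Nat.lt_or_ge y.1 i with h'' | h''
              · exact h''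
              · exact absurd (Prod.ext (le_antisymm h1 h'') h2') hy
            have hi0 : i ≠ 0 := by omega
            rcases hcond with h | h
            · omega
            · calc y.2 = μ.rowLen i := h2'
                _ < μ.rowLen (i - 1) := h
                _ ≤ μ.rowLen y.1 := μ.rowLen_anti _ _ (by omega)
      · exact Or.inr (μ.isLowerSet hyx hx)

lemma corner_iff {μ : YoungDiagram} {i j : ℕ} :
    Corner μ (i, j) ↔ j + 1 = μ.rowLen i ∧ μ.rowLen (i + 1) < μ.rowLen i := by
  simp only [Corner, YoungDiagram.mem_cells, YoungDiagram.mem_iff_lt_rowLen]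
  constructor
  · rintro ⟨h1, h2, h3⟩
    have := μ.rowLen_anti i (i + 1) (by omega)
    omega
  · rintro ⟨h1, h2⟩
    have := μ.rowLen_anti i (i + 1) (by omega)
    omega

noncomputable def addables (μ : YoungDiagram) : Finset (ℕ × ℕ) :=
  ((Finset.range (μ.colLen 0 + 1)).filter
    (fun i => i = 0 ∨ μ.rowLen i < μ.rowLen (i - 1))).image (fun i => (i, μ.rowLen i))

def corners (μ : YoungDiagram) : Finset (ℕ × ℕ) :=
  ((Finset.range (μ.colLen 0 + 1)).filter
    (fun i => μ.rowLen (i + 1) < μ.rowLen i)).image (fun i => (i, μ.rowLen i - 1))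

lemma rowLen_pos_bound {μ : YoungDiagram} {i : ℕ} (h : 0 < μ.rowLen i) : i < μ.colLen 0 := by
  rw [← YoungDiagram.mem_iff_lt_colLen]
  exact μ.up_left_mem le_rfl (Nat.zero_le _) (YoungDiagram.mem_iff_lt_rowLen.mpr h)

lemma mem_addables {μ : YoungDiagram} {c : ℕ × ℕ} : c ∈ addables μ ↔ Addable μ c := by
  obtain ⟨i, j⟩ := c
  rw [addable_iff, addables]
  simp only [Finset.mem_image, Finset.mem_filter, Finset.mem_range]
  constructor
  · rintro ⟨a, ⟨ha1, ha2⟩, ha3⟩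
    obtain ⟨rfl, rfl⟩ : a = i ∧ μ.rowLen a = j := by
      constructor <;> [exact congrArg Prod.fst ha3; exact congrArg Prod.snd ha3]
    exact ⟨rfl, ha2⟩
  · rintro ⟨rfl, hcond⟩
    refine ⟨i, ⟨?_, hcond⟩, rfl⟩
    rcases hcond with rfl | h
    · omega
    · have : 0 < μ.rowLen (i - 1) := by omega
      have := rowLen_pos_bound this
      omega

lemma mem_corners {μ : YoungDiagram} {d : ℕ × ℕ} : d ∈ corners μ ↔ Corner μ d := by
  obtain ⟨i, j⟩ := d
  rw [corner_iff, corners]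
  simp only [Finset.mem_image, Finset.mem_filter, Finset.mem_range]
  constructor
  · rintro ⟨a, ⟨ha1, ha2⟩, ha3⟩
    obtain ⟨rfl, rfl⟩ : a = i ∧ μ.rowLen a - 1 = j := by
      constructor <;> [exact congrArg Prod.fst ha3; exact congrArg Prod.snd ha3]
    constructor <;> omega
  · rintro ⟨h1, h2⟩
    refine ⟨i, ⟨?_, h2⟩, by simp; omega⟩
    have : 0 < μ.rowLen i := by omega
    have := rowLen_pos_bound this
    omega

lemma sumA_eq_sumR (μ : YoungDiagram) :
    ∑ c ∈ addables μ, ((c.1 : ℤ) - (c.2 : ℤ)) = ∑ d ∈ corners μ, ((d.1 : ℤ) - (d.2 : ℤ)) := by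
  classical
  set r := μ.colLen 0 with hr
  have hρr : μ.rowLen r = 0 := by
    by_contra h
    have := rowLen_pos_bound (μ := μ) (i := r) (by omega)
    omega
  -- rewrite both sides as sums over index sets
  rw [addables, corners, Finset.sum_image (by intro a _ b _ h; exact congrArg Prod.fst h),
    Finset.sum_image (by intro a _ b _ h; exact congrArg Prod.fst h)]
  -- the addable index set is {0} ∪ (succ of the removable index set)
  have hA : (Finset.range (r + 1)).filter (fun i => i = 0 ∨ μ.rowLen i < μ.rowLen (i - 1))
      = insert 0 ((((Finset.range (r + 1)).filter
          (fun i => μ.rowLen (i + 1) < μ.rowLen i))).image Nat.succ) := by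
    ext i
    simp only [Finset.mem_insert, Finset.mem_image, Finset.mem_filter, Finset.mem_range]
    constructor
    · rintro ⟨hi, rfl | h⟩
      · exact Or.inl rfl
      · rcases Nat.eq_zero_or_pos i with rfl | h0
        · exact Or.inl rfl
        · right
          exact ⟨i - 1, ⟨by omega, by
            have : i - 1 + 1 = i := by omega
            rw [this]; omega⟩, by omega⟩
    · rintro (rfl | ⟨a, ⟨ha1, ha2⟩, rfl⟩)
      · exact ⟨by omega, Or.inl rfl⟩
      · have hpos : 0 < μ.rowLen a := by omega
        have hb := rowLen_pos_bound hpos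
        rw [← hr] at hb
        refine ⟨by omega, Or.inr ?_⟩
        simpa using ha2
  rw [hA, Finset.sum_insert (by simp)]
  rw [Finset.sum_image (by intro a _ b _ h; omega)]
  -- goal now about sums over the same filter set
  set IR := (Finset.range (r + 1)).filter (fun i => μ.rowLen (i + 1) < μ.rowLen i) with hIR
  have key : ∑ i ∈ IR, ((μ.rowLen i : ℤ) - (μ.rowLen (i + 1) : ℤ)) = (μ.rowLen 0 : ℤ) := by
    rw [hIR, Finset.sum_filter_of_ne (by
      intro i hi h
      by_contra hne
      have hle := μ.rowLen_anti i (i + 1) (by omega)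
      have heq : μ.rowLen (i + 1) = μ.rowLen i := by omega
      rw [heq] at h
      simp at h)]
    rw [show (fun i => (μ.rowLen i : ℤ) - (μ.rowLen (i + 1) : ℤ)) =
      (fun i => (fun k => (μ.rowLen k : ℤ)) i - (fun k => (μ.rowLen k : ℤ)) (i + 1)) from rfl,
      Finset.sum_range_sub' (fun k => (μ.rowLen k : ℤ)) (r + 1)]
    have : μ.rowLen (r + 1) = 0 := by
      have := μ.rowLen_anti r (r + 1) (by omega)
      omega
    rw [this]
    simp
  have e1 : ∀ x ∈ IR, (((Nat.succ x, μ.rowLen (Nat.succ x)).1 : ℕ) : ℤ)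
      - (((Nat.succ x, μ.rowLen (Nat.succ x)).2 : ℕ) : ℤ)
      = ((x : ℤ) + 1) - (μ.rowLen (x + 1) : ℤ) := by
    intro x hx
    show ((x + 1 : ℕ) : ℤ) - ((μ.rowLen (x + 1) : ℕ) : ℤ) = _
    push_cast
    ring
  have e2 : ∀ x ∈ IR, (((x, μ.rowLen x - 1).1 : ℕ) : ℤ) - (((x, μ.rowLen x - 1).2 : ℕ) : ℤ)
      = (x : ℤ) - (((μ.rowLen x : ℤ)) - 1) := by
    intro x hx
    rw [hIR] at hx
    simp only [Finset.mem_filter] at hx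
    have h1 : 0 < μ.rowLen x := by omega
    show ((x : ℕ) : ℤ) - ((μ.rowLen x - 1 : ℕ) : ℤ) = _
    have : ((μ.rowLen x - 1 : ℕ) : ℤ) = (μ.rowLen x : ℤ) - 1 := by
      push_cast [h1]
      ring
    rw [this]
  rw [Finset.sum_congr rfl e1, Finset.sum_congr rfl e2]
  have h1 : ∑ x ∈ IR, (((x : ℤ) + 1) - (μ.rowLen (x + 1) : ℤ))
      - ∑ x ∈ IR, ((x : ℤ) - ((μ.rowLen x : ℤ) - 1)) = ∑ x ∈ IR,
        ((((x : ℤ) + 1) - (μ.rowLen (x + 1) : ℤ)) - ((x : ℤ) - ((μ.rowLen x : ℤ) - 1))) :=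
    (Finset.sum_sub_distrib _ _).symm
  have h2 : ∀ x ∈ IR, ((((x : ℤ) + 1) - (μ.rowLen (x + 1) : ℤ))
      - ((x : ℤ) - ((μ.rowLen x : ℤ) - 1))) = ((μ.rowLen x : ℤ) - (μ.rowLen (x + 1) : ℤ)) := by
    intro x hx
    ring
  rw [Finset.sum_congr rfl h2, key] at h1
  have e0 : (((0, μ.rowLen 0).1 : ℕ) : ℤ) - (((0, μ.rowLen 0).2 : ℕ) : ℤ)
      = 0 - (μ.rowLen 0 : ℤ) := by
    show ((0 : ℕ) : ℤ) - ((μ.rowLen 0 : ℕ) : ℤ) = _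
    push_cast
    ring
  rw [e0]
  linarith [h1]


/-! ### The branching recursion for numSYT -/

def IsSYT (ν : YoungDiagram) (e : ν.cells ≃ Fin ν.card) : Prop :=
  ∀ a b : ν.cells,
    (((a : ℕ × ℕ).1 = (b : ℕ × ℕ).1 ∧ (a : ℕ × ℕ).2 < (b : ℕ × ℕ).2) → e a < e b) ∧
    (((a : ℕ × ℕ).2 = (b : ℕ × ℕ).2 ∧ (a : ℕ × ℕ).1 < (b : ℕ × ℕ).1) → e a < e b)

lemma numSYT_eq (ν : YoungDiagram) :
    numSYT ν = Nat.card {e : ν.cells ≃ Fin ν.card // IsSYT ν e} := rfl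

lemma mem_erase_cells {ν : YoungDiagram} {d : ℕ × ℕ} (hd : Corner ν d) {x : ℕ × ℕ} :
    x ∈ (ydErase ν d).cells ↔ x ≠ d ∧ x ∈ ν.cells := by
  rw [ydErase_cells hd, Finset.mem_erase]

def topFin (ν : YoungDiagram) (h0 : 0 < ν.card) : Fin ν.card :=
  ⟨ν.card - 1, Nat.sub_lt h0 one_pos⟩

lemma top_corner {ν : YoungDiagram} (h0 : 0 < ν.card) {e : ν.cells ≃ Fin ν.card}
    (he : IsSYT ν e) : Corner ν ((e.symm (topFin ν h0) : ν.cells) : ℕ × ℕ) := by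
  set a : ν.cells := e.symm (topFin ν h0) with ha
  have h1 : e a = topFin ν h0 := by rw [ha, Equiv.apply_symm_apply]
  refine ⟨a.2, fun hmem => ?_, fun hmem => ?_⟩
  · have hb := (he a ⟨((a : ℕ × ℕ).1 + 1, (a : ℕ × ℕ).2), hmem⟩).2 ⟨rfl, Nat.lt_succ_self _⟩
    rw [h1] at hb
    have h2 := (e ⟨((a : ℕ × ℕ).1 + 1, (a : ℕ × ℕ).2), hmem⟩).isLt
    simp only [topFin, Fin.lt_def] at hb
    omega
  · have hb := (he a ⟨((a : ℕ × ℕ).1, (a : ℕ × ℕ).2 + 1), hmem⟩).1 ⟨rfl, Nat.lt_succ_self _⟩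
    rw [h1] at hb
    have h2 := (e ⟨((a : ℕ × ℕ).1, (a : ℕ × ℕ).2 + 1), hmem⟩).isLt
    simp only [topFin, Fin.lt_def] at hb
    omega

section RestrictExtend

variable {ν : YoungDiagram} {d : ℕ × ℕ}

def liftCell (hd : Corner ν d) (x : (ydErase ν d).cells) : ν.cells :=
  ⟨x.1, ((mem_erase_cells hd).1 x.2).2⟩

def dropCell (hd : Corner ν d) (x : ν.cells) (hx : (x : ℕ × ℕ) ≠ d) : (ydErase ν d).cells :=
  ⟨x.1, (mem_erase_cells hd).2 ⟨hx, x.2⟩⟩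

def lowFin (hd : Corner ν d) (k : Fin (ydErase ν d).card) : Fin ν.card :=
  ⟨k.1, by have h := k.isLt; have h2 := ydErase_card hd; omega⟩

def upFin (hd : Corner ν d) (k : Fin ν.card) (hk : (k : ℕ) ≠ ν.card - 1) :
    Fin (ydErase ν d).card :=
  ⟨k.1, by have h2 := ydErase_card hd; have h := k.isLt; omega⟩

noncomputable def restrictE (h0 : 0 < ν.card) (hd : Corner ν d) (e : ν.cells ≃ Fin ν.card)
    (htop : ((e.symm (topFin ν h0) : ν.cells) : ℕ × ℕ) = d) :
    (ydErase ν d).cells ≃ Fin (ydErase ν d).card where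
  toFun x := ⟨(e (liftCell hd x)).1, by
    have hc := ydErase_card hd
    have h1 := (e (liftCell hd x)).isLt
    have h2 : ((e (liftCell hd x)) : ℕ) ≠ ν.card - 1 := by
      intro h
      have h3 : e (liftCell hd x) = topFin ν h0 := Fin.ext h
      have hx : liftCell hd x = e.symm (topFin ν h0) := by
        rw [← h3, Equiv.symm_apply_apply]
      exact ((mem_erase_cells hd).1 x.2).1 (by rw [show (x : ℕ × ℕ) = ((liftCell hd x : ν.cells) : ℕ × ℕ) from rfl, hx, htop])
    omega⟩
  invFun k := dropCell hd (e.symm (lowFin hd k)) (by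
    intro h
    have h1 : (e.symm (lowFin hd k) : ν.cells) = e.symm (topFin ν h0) :=
      Subtype.ext (h.trans htop.symm)
    have h2 := congrArg Fin.val (e.symm.injective h1)
    simp only [lowFin, topFin] at h2
    have h4 := k.isLt
    have hc := ydErase_card hd
    omega)
  left_inv x := by
    dsimp only
    apply Subtype.ext
    simp only [dropCell, lowFin, Fin.eta, Equiv.symm_apply_apply]
    rfl
  right_inv k := by
    dsimp only
    apply Fin.ext
    simp only [dropCell, lowFin, liftCell, Subtype.coe_eta, Equiv.apply_symm_apply]

noncomputable def extendE (h0 : 0 < ν.card) (hd : Corner ν d)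
    (e' : (ydErase ν d).cells ≃ Fin (ydErase ν d).card) : ν.cells ≃ Fin ν.card where
  toFun x := if hx : (x : ℕ × ℕ) = d then topFin ν h0 else lowFin hd (e' (dropCell hd x hx))
  invFun k := if hk : (k : ℕ) = ν.card - 1 then ⟨d, hd.1⟩ else liftCell hd (e'.symm (upFin hd k hk))
  left_inv x := by
    dsimp only
    by_cases hx : (x : ℕ × ℕ) = d
    · rw [dif_pos hx]
      rw [dif_pos (show ((topFin ν h0 : Fin ν.card) : ℕ) = ν.card - 1 from rfl)]
      exact Subtype.ext hx.symm
    · rw [dif_neg hx]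
      have hne : ((lowFin hd (e' (dropCell hd x hx))) : ℕ) ≠ ν.card - 1 := by
        have h1 := (e' (dropCell hd x hx)).isLt
        have hc := ydErase_card hd
        simp only [lowFin]
        omega
      rw [dif_neg hne]
      apply Subtype.ext
      have h2 : upFin hd (lowFin hd (e' (dropCell hd x hx))) hne = e' (dropCell hd x hx) :=
        Fin.ext rfl
      rw [h2, Equiv.symm_apply_apply]
      rfl
  right_inv k := by
    dsimp only
    by_cases hk : (k : ℕ) = ν.card - 1
    · rw [dif_pos hk]
      rw [dif_pos (show ((⟨d, hd.1⟩ : ν.cells) : ℕ × ℕ) = d from rfl)]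
      exact Fin.ext (by simp [topFin, hk])
    · rw [dif_neg hk]
      have hne : ((liftCell hd (e'.symm (upFin hd k hk)) : ν.cells) : ℕ × ℕ) ≠ d := by
        exact ((mem_erase_cells hd).1 (e'.symm (upFin hd k hk)).2).1
      rw [dif_neg hne]
      apply Fin.ext
      have h2 : dropCell hd (liftCell hd (e'.symm (upFin hd k hk))) hne
          = e'.symm (upFin hd k hk) := Subtype.ext rfl
      rw [h2, Equiv.apply_symm_apply]
      rfl

lemma isSYT_restrict (h0 : 0 < ν.card) (hd : Corner ν d) (e : ν.cells ≃ Fin ν.card)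
    (htop : ((e.symm (topFin ν h0) : ν.cells) : ℕ × ℕ) = d) (he : IsSYT ν e) :
    IsSYT (ydErase ν d) (restrictE h0 hd e htop) := by
  intro a b
  constructor
  · intro hab
    exact (he (liftCell hd a) (liftCell hd b)).1 hab
  · intro hab
    exact (he (liftCell hd a) (liftCell hd b)).2 hab

lemma isSYT_extend (h0 : 0 < ν.card) (hd : Corner ν d)
    (e' : (ydErase ν d).cells ≃ Fin (ydErase ν d).card)
    (he' : IsSYT (ydErase ν d) e') : IsSYT ν (extendE h0 hd e') := by
  intro a b
  constructor
  · rintro ⟨h1, h2⟩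
    by_cases hb : (b : ℕ × ℕ) = d
    · have ha : (a : ℕ × ℕ) ≠ d := by
        intro h
        rw [h, hb] at h2
        omega
      simp only [extendE, Equiv.coe_fn_mk, dif_pos hb, dif_neg ha]
      have h3 := (e' (dropCell hd a ha)).isLt
      have hc := ydErase_card hd
      show ((e' (dropCell hd a ha) : Fin (ydErase ν d).card) : ℕ) < ν.card - 1
      omega
    · by_cases ha : (a : ℕ × ℕ) = d
      · exfalso
        have ha1 : d.1 = (b : ℕ × ℕ).1 := by rw [← ha]; exact h1
        have ha2 : d.2 < (b : ℕ × ℕ).2 := by rw [← ha]; exact h2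
        exact hd.2.2 (ν.up_left_mem (le_of_eq ha1) ha2 b.2)
      · simp only [extendE, Equiv.coe_fn_mk, dif_neg ha, dif_neg hb]
        exact (he' (dropCell hd a ha) (dropCell hd b hb)).1 ⟨h1, h2⟩
  · rintro ⟨h1, h2⟩
    by_cases hb : (b : ℕ × ℕ) = d
    · have ha : (a : ℕ × ℕ) ≠ d := by
        intro h
        rw [h, hb] at h2
        omega
      simp only [extendE, Equiv.coe_fn_mk, dif_pos hb, dif_neg ha]
      have h3 := (e' (dropCell hd a ha)).isLt
      have hc := ydErase_card hd
      show ((e' (dropCell hd a ha) : Fin (ydErase ν d).card) : ℕ) < ν.card - 1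
      omega
    · by_cases ha : (a : ℕ × ℕ) = d
      · exfalso
        have ha1 : d.2 = (b : ℕ × ℕ).2 := by rw [← ha]; exact h1
        have ha2 : d.1 < (b : ℕ × ℕ).1 := by rw [← ha]; exact h2
        exact hd.2.1 (ν.up_left_mem ha2 (le_of_eq ha1) b.2)
      · simp only [extendE, Equiv.coe_fn_mk, dif_neg ha, dif_neg hb]
        exact (he' (dropCell hd a ha) (dropCell hd b hb)).2 ⟨h1, h2⟩

lemma extend_top (h0 : 0 < ν.card) (hd : Corner ν d)
    (e' : (ydErase ν d).cells ≃ Fin (ydErase ν d).card) :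
    (((extendE h0 hd e').symm (topFin ν h0) : ν.cells) : ℕ × ℕ) = d := by
  show ((dite _ _ _ : ν.cells) : ℕ × ℕ) = d
  rw [dif_pos (show ((topFin ν h0 : Fin ν.card) : ℕ) = ν.card - 1 from rfl)]

end RestrictExtend

lemma card_fiber (ν : YoungDiagram) (h0 : 0 < ν.card) (d : ℕ × ℕ) (hd : Corner ν d) :
    Nat.card {p : {e : ν.cells ≃ Fin ν.card // IsSYT ν e} //
      ((p.1.symm (topFin ν h0) : ν.cells) : ℕ × ℕ) = d} = numSYT (ydErase ν d) := by
  rw [numSYT_eq]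
  apply Nat.card_congr
  refine
    { toFun := fun p => ⟨restrictE h0 hd p.1.1 p.2, isSYT_restrict h0 hd p.1.1 p.2 p.1.2⟩
      invFun := fun q => ⟨⟨extendE h0 hd q.1, isSYT_extend h0 hd q.1 q.2⟩, extend_top h0 hd q.1⟩
      left_inv := ?_
      right_inv := ?_ }
  · rintro ⟨⟨e, he⟩, htop⟩
    apply Subtype.ext
    apply Subtype.ext
    apply Equiv.ext
    intro x
    by_cases hx : (x : ℕ × ℕ) = d
    · show dite _ _ _ = e x
      rw [dif_pos hx]
      have h1 : x = e.symm (topFin ν h0) := Subtype.ext (hx.trans htop.symm)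
      rw [h1, Equiv.apply_symm_apply]
    · show dite _ _ _ = e x
      rw [dif_neg hx]
      apply Fin.ext
      show ((restrictE h0 hd e htop) (dropCell hd x hx) : ℕ) = _
      show (e (liftCell hd (dropCell hd x hx)) : ℕ) = _
      have h2 : liftCell hd (dropCell hd x hx) = x := Subtype.ext rfl
      rw [h2]
  · rintro ⟨e', he'⟩
    apply Subtype.ext
    apply Equiv.ext
    intro x
    apply Fin.ext
    show ((extendE h0 hd e') (liftCell hd x) : ℕ) = _
    have hx : ((liftCell hd x : ν.cells) : ℕ × ℕ) ≠ d := ((mem_erase_cells hd).1 x.2).1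
    show (dite _ _ _ : Fin ν.card).1 = _
    rw [dif_neg hx]
    show (e' (dropCell hd (liftCell hd x) hx) : ℕ) = _
    have h2 : dropCell hd (liftCell hd x) hx = x := Subtype.ext rfl
    rw [h2]

lemma numSYT_rec (ν : YoungDiagram) (h0 : 0 < ν.card) :
    numSYT ν = ∑ d ∈ corners ν, numSYT (ydErase ν d) := by
  classical
  rw [numSYT_eq]
  have hcor : ∀ p : {e : ν.cells ≃ Fin ν.card // IsSYT ν e},
      ((p.1.symm (topFin ν h0) : ν.cells) : ℕ × ℕ) ∈ corners ν :=
    fun p => mem_corners.mpr (top_corner h0 p.2)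
  set f : {e : ν.cells ≃ Fin ν.card // IsSYT ν e} → {d : ℕ × ℕ // d ∈ corners ν} :=
    fun p => ⟨((p.1.symm (topFin ν h0) : ν.cells) : ℕ × ℕ), hcor p⟩ with hf
  rw [← Nat.card_congr (Equiv.sigmaFiberEquiv f)]
  rw [Nat.card_eq_fintype_card, Fintype.card_sigma]
  rw [← Finset.sum_coe_sort (corners ν) (fun d => numSYT (ydErase ν d))]
  apply Finset.sum_congr rfl
  intro x hx
  rw [← Nat.card_eq_fintype_card]
  rw [← card_fiber ν h0 x.1 (mem_corners.mp x.2)]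
  apply Nat.card_congr
  apply Equiv.subtypeEquivRight
  intro p
  constructor
  · intro h
    exact congrArg Subtype.val h
  · intro h
    exact Subtype.ext h

/-! ### Swap lemmas -/

lemma swap_forward {μ : YoungDiagram} {c d : ℕ × ℕ} (hne : c ≠ d) (hc : Addable μ c)
    (hd : Corner (ydInsert μ c) d) : Corner μ d ∧ Addable (ydErase μ d) c := by
  have hcells := ydInsert_cells hc
  rw [Corner, hcells] at hd
  obtain ⟨hdm, hu, hr⟩ := hd
  have hdM : d ∈ μ.cells := by
    rcases Finset.mem_insert.mp hdm with h | h
    · exact absurd h.symm hne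
    · exact h
  have hcornerμ : Corner μ d :=
    ⟨hdM, fun h => hu (Finset.mem_insert_of_mem h), fun h => hr (Finset.mem_insert_of_mem h)⟩
  refine ⟨hcornerμ, ?_, ?_⟩
  · rw [ydErase_cells hcornerμ, Finset.mem_erase]
    rintro ⟨-, h⟩
    exact hc.1 h
  · have h1 : IsLowerSet (↑((ydInsert μ c).cells.erase d) : Set (ℕ × ℕ)) :=
      isLowerSet_erase ⟨by rw [hcells]; exact hdm, by rw [hcells]; exact hu, by rw [hcells]; exact hr⟩
    rw [hcells, Finset.erase_insert_of_ne hne] at h1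
    rw [ydErase_cells hcornerμ]
    exact h1

lemma swap_backward {μ : YoungDiagram} {c d : ℕ × ℕ} (hne : c ≠ d) (hd : Corner μ d)
    (hc : Addable (ydErase μ d) c) : Addable μ c ∧ Corner (ydInsert μ c) d := by
  have hE := ydErase_cells hd
  obtain ⟨hcE, hls⟩ := hc
  rw [hE] at hcE hls
  have hcM : c ∉ μ.cells := by
    intro h
    exact hcE (Finset.mem_erase.mpr ⟨hne, h⟩)
  -- c is not one of the two cells covering d
  have hcu : c ≠ (d.1 + 1, d.2) := by
    intro h
    have hdmem : d ∈ (↑(insert c (μ.cells.erase d)) : Set (ℕ × ℕ)) := by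
      apply hls (a := c) ?_ (by simp)
      rw [h]
      exact Prod.mk_le_mk.mpr ⟨Nat.le_succ _, le_rfl⟩
    simp only [Finset.coe_insert, Set.mem_insert_iff, Finset.mem_coe, Finset.mem_erase] at hdmem
    rcases hdmem with h' | h'
    · exact hne (h'.symm)
    · exact h'.1 rfl
  have hcr : c ≠ (d.1, d.2 + 1) := by
    intro h
    have hdmem : d ∈ (↑(insert c (μ.cells.erase d)) : Set (ℕ × ℕ)) := by
      apply hls (a := c) ?_ (by simp)
      rw [h]
      exact Prod.mk_le_mk.mpr ⟨le_rfl, Nat.le_succ _⟩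
    simp only [Finset.coe_insert, Set.mem_insert_iff, Finset.mem_coe, Finset.mem_erase] at hdmem
    rcases hdmem with h' | h'
    · exact hne (h'.symm)
    · exact h'.1 rfl
  have haddμ : Addable μ c := by
    refine ⟨hcM, ?_⟩
    intro x y hyx hx
    simp only [Finset.coe_insert, Set.mem_insert_iff, Finset.mem_coe] at hx ⊢
    rcases hx with rfl | hx
    · have hy : y ∈ (↑(insert x (μ.cells.erase d)) : Set (ℕ × ℕ)) := hls hyx (by simp)
      simp only [Finset.coe_insert, Set.mem_insert_iff, Finset.mem_coe, Finset.mem_erase] at hy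
      rcases hy with h' | h'
      · exact Or.inl h'
      · exact Or.inr h'.2
    · exact Or.inr (μ.isLowerSet hyx hx)
  refine ⟨haddμ, ?_⟩
  rw [Corner, ydInsert_cells haddμ]
  refine ⟨Finset.mem_insert_of_mem hd.1, ?_, ?_⟩
  · rw [Finset.mem_insert]
    rintro (h | h)
    · exact hcu h.symm
    · exact hd.2.1 h
  · rw [Finset.mem_insert]
    rintro (h | h)
    · exact hcr h.symm
    · exact hd.2.2 h

lemma swap_diag {μ : YoungDiagram} {c d : ℕ × ℕ} (hne : c ≠ d) (hc : Addable μ c)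
    (hd' : Corner (ydInsert μ c) d) (hd : Corner μ d) (hc' : Addable (ydErase μ d) c) :
    ydErase (ydInsert μ c) d = ydInsert (ydErase μ d) c := by
  ext1
  rw [ydErase_cells hd', ydInsert_cells hc, ydInsert_cells hc', ydErase_cells hd,
    Finset.erase_insert_of_ne hne]

/-! ### Main induction -/

noncomputable def SS (μ : YoungDiagram) : ℤ :=
  ∑ c ∈ addables μ, (numSYT (ydInsert μ c) : ℤ) * ((c.1 : ℤ) - (c.2 : ℤ))

lemma SS_zero : ∀ (n : ℕ) (μ : YoungDiagram), μ.card = n → SS μ = 0 := by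
  intro n
  induction n using Nat.strong_induction_on with
  | _ n IH =>
    intro μ hcard
    classical
    have hsplit : ∀ c ∈ addables μ, (numSYT (ydInsert μ c) : ℤ) * ((c.1 : ℤ) - (c.2 : ℤ))
        = (numSYT μ : ℤ) * ((c.1 : ℤ) - (c.2 : ℤ))
          + ∑ d ∈ (corners (ydInsert μ c)).erase c,
              (numSYT (ydErase (ydInsert μ c) d) : ℤ) * ((c.1 : ℤ) - (c.2 : ℤ)) := by
      intro c hc
      have hc' := mem_addables.mp hc
      have hpos : 0 < (ydInsert μ c).card := by
        rw [ydInsert_card hc']; omega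
      have hcc : c ∈ corners (ydInsert μ c) := mem_corners.mpr (corner_insert hc')
      rw [numSYT_rec (ydInsert μ c) hpos, ← Finset.add_sum_erase _ _ hcc, erase_ydInsert hc']
      push_cast
      rw [add_mul, Finset.sum_mul]
    rw [SS, Finset.sum_congr rfl hsplit, Finset.sum_add_distrib, ← Finset.mul_sum]
    have hpair : ∑ c ∈ addables μ, ∑ d ∈ (corners (ydInsert μ c)).erase c,
        (numSYT (ydErase (ydInsert μ c) d) : ℤ) * ((c.1 : ℤ) - (c.2 : ℤ))
        = ∑ d ∈ corners μ, ∑ c ∈ (addables (ydErase μ d)).erase d,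
          (numSYT (ydInsert (ydErase μ d) c) : ℤ) * ((c.1 : ℤ) - (c.2 : ℤ)) := by
      rw [Finset.sum_sigma' (addables μ) (fun c => (corners (ydInsert μ c)).erase c),
        Finset.sum_sigma' (corners μ) (fun d => (addables (ydErase μ d)).erase d)]
      apply Finset.sum_nbij' (i := fun p => ⟨p.2, p.1⟩) (j := fun p => ⟨p.2, p.1⟩)
      · rintro ⟨c, d⟩ hp
        rw [Finset.mem_sigma] at hp
        obtain ⟨hcA, hdc⟩ := hp
        rw [Finset.mem_erase] at hdc
        obtain ⟨hdnec, hdcor⟩ := hdc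
        have hne : c ≠ d := fun h => hdnec h.symm
        obtain ⟨h1, h2⟩ := swap_forward hne (mem_addables.mp hcA) (mem_corners.mp hdcor)
        rw [Finset.mem_sigma, Finset.mem_erase]
        exact ⟨mem_corners.mpr h1, hne, mem_addables.mpr h2⟩
      · rintro ⟨d, c⟩ hp
        rw [Finset.mem_sigma] at hp
        obtain ⟨hdcor, hcA⟩ := hp
        rw [Finset.mem_erase] at hcA
        obtain ⟨hcned, hcA⟩ := hcA
        obtain ⟨h1, h2⟩ := swap_backward hcned (mem_corners.mp hdcor) (mem_addables.mp hcA)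
        rw [Finset.mem_sigma, Finset.mem_erase]
        exact ⟨mem_addables.mpr h1, fun h => hcned h.symm, mem_corners.mpr h2⟩
      · rintro ⟨c, d⟩ _; rfl
      · rintro ⟨d, c⟩ _; rfl
      · rintro ⟨c, d⟩ hp
        rw [Finset.mem_sigma] at hp
        obtain ⟨hcA, hdc⟩ := hp
        rw [Finset.mem_erase] at hdc
        obtain ⟨hdnec, hdcor⟩ := hdc
        have hne : c ≠ d := fun h => hdnec h.symm
        have hcA' := mem_addables.mp hcA
        have hdcor' := mem_corners.mp hdcor
        obtain ⟨h1, h2⟩ := swap_forward hne hcA' hdcor'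
        rw [swap_diag hne hcA' hdcor' h1 h2]
    have hinner : ∀ d ∈ corners μ, ∑ c ∈ (addables (ydErase μ d)).erase d,
        (numSYT (ydInsert (ydErase μ d) c) : ℤ) * ((c.1 : ℤ) - (c.2 : ℤ))
        = -((numSYT μ : ℤ) * ((d.1 : ℤ) - (d.2 : ℤ))) := by
      intro d hd
      have hd' := mem_corners.mp hd
      have hmem : d ∈ addables (ydErase μ d) := mem_addables.mpr (addable_erase hd')
      rw [Finset.sum_erase_eq_sub hmem]
      have hSS : (∑ c ∈ addables (ydErase μ d),
          (numSYT (ydInsert (ydErase μ d) c) : ℤ) * ((c.1 : ℤ) - (c.2 : ℤ))) = 0 := by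
        have hlt : (ydErase μ d).card < n := by
          have h1 := ydErase_card hd'
          have h2 : 0 < μ.card := Finset.card_pos.mpr ⟨d, hd'.1⟩
          omega
        have := IH _ hlt (ydErase μ d) rfl
        rwa [SS] at this
      rw [hSS, insert_ydErase hd']
      ring
    rw [hpair, Finset.sum_congr rfl hinner]
    rw [Finset.sum_neg_distrib, ← Finset.mul_sum]
    rw [sumA_eq_sumR μ]
    ring

end YD11


theorem stmt11 (μ : YoungDiagram) (A : Finset (ℕ × ℕ))
    -- `A` is the set of addable nodes of the diagram of `μ`:
    (hA : ∀ c : ℕ × ℕ, c ∈ A ↔ c ∉ μ.cells ∧ ∃ ν : YoungDiagram, ν.cells = insert c μ.cells)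
    -- `g c` is the Young diagram obtained by adding the node `c`:
    (g : ℕ × ℕ → YoungDiagram) (hg : ∀ c ∈ A, (g c).cells = insert c μ.cells) :
    -- Σ_λ dim(S^λ)·(i(λ) − j(λ)) = 0  (with (i,j) the 1-indexed position of the
    -- added node, so i − j = (c.1+1) − (c.2+1) = c.1 − c.2):
    ∑ c ∈ A, (numSYT (g c) : ℤ) * ((c.1 : ℤ) - (c.2 : ℤ)) = 0 := by
  have hAeq : A = YD11.addables μ := by
    ext c
    rw [hA, YD11.mem_addables, YD11.Addable]
    constructor
    · rintro ⟨h1, ν, hν⟩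
      refine ⟨h1, ?_⟩
      rw [← hν]
      exact ν.isLowerSet
    · rintro ⟨h1, h2⟩
      exact ⟨h1, ⟨insert c μ.cells, h2⟩, rfl⟩
  have hsum : ∑ c ∈ A, (numSYT (g c) : ℤ) * ((c.1 : ℤ) - (c.2 : ℤ)) = YD11.SS μ := by
    rw [YD11.SS, hAeq]
    apply Finset.sum_congr rfl
    intro c hc
    have hc' := YD11.mem_addables.mp hc
    have : g c = YD11.ydInsert μ c := by
      ext1
      rw [hg c (by rw [hAeq]; exact hc), YD11.ydInsert_cells hc']
    rw [this]
  rw [hsum, YD11.SS_zero μ.card μ rfl]
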